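/- Let K be a standard bilinear Calderón–Zygmund kernel on ℝⁿ with exponent α ∈ (0,1], let φ ∈ 𝒜 and 0 < ε₁ < ε₂. Then ‖T^φ_{ε₁,ε₂}‖_WBP ≤ C(n) (‖K‖_{CZ_α} + ‖T_{ε₁}‖_WBP + ‖T_{ε₂}‖_WBP), where C(n) depends only on n. -/

import Mathlib

open MeasureTheory Set
open scoped ENNReal NNReal Classical

noncomputable section

namespace Bilinear

/-- Points of `ℝⁿ`, equipped with the `ℓ^∞` (sup) metric. -/
abbrev E (n : ℕ) : Type := Fin n → ℝ

/-- An axis-parallel cube in `ℝⁿ`, described by its lower corner and its side length. -/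
structure Cube (n : ℕ) where
  corner : Fin n → ℝ
  side : ℝ
  side_pos : 0 < side

namespace Cube

variable {n : ℕ}

/-- The (half-open) cube as a subset of `ℝⁿ`. -/
def set (Q : Cube n) : Set (E n) :=
  {x | ∀ i, Q.corner i ≤ x i ∧ x i < Q.corner i + Q.side}

/-- The closed cube as a subset of `ℝⁿ`. -/
def clSet (Q : Cube n) : Set (E n) :=
  {x | ∀ i, Q.corner i ≤ x i ∧ x i ≤ Q.corner i + Q.side}

/-- The volume `|Q| = ℓ(Q)ⁿ` of a cube. -/
def vol (Q : Cube n) : ℝ := Q.side ^ n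

/-- The center of a cube. -/
def center (Q : Cube n) : E n := fun i => Q.corner i + Q.side / 2

/-- The concentric dilate `cQ` of a cube (defined for `c ≥ 1`; junk otherwise). -/
def dilate (Q : Cube n) (c : ℝ) : Cube n where
  corner := fun i => Q.corner i + Q.side / 2 - max c 1 * Q.side / 2
  side := max c 1 * Q.side
  side_pos := mul_pos (lt_of_lt_of_le one_pos (le_max_right c 1)) Q.side_pos

end Cube

/-- The (`ℓ^∞`) distance between two sets of `ℝⁿ`. -/
def setDist {n : ℕ} (s t : Set (E n)) : ℝ := sInf (Set.image2 dist s t)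

/-- The (`ℓ^∞`) distance between two cubes. -/
def cubeDist {n : ℕ} (Q R : Cube n) : ℝ := setDist Q.clSet R.clSet

/-- The indicator function `1_Q` of a cube, as a complex-valued function. -/
def indC {n : ℕ} (Q : Cube n) : E n → ℂ := fun x => if x ∈ Q.set then 1 else 0

/-- The average `⟨|f|⟩_Q` of `|f|` over a cube. -/
def avgAbs {n : ℕ} (Q : Cube n) (f : E n → ℂ) : ℝ := Q.vol⁻¹ * ∫ x in Q.set, ‖f x‖

/-- The average `⟨f⟩_Q` of `f` over a cube. -/
def avg {n : ℕ} (Q : Cube n) (f : E n → ℂ) : ℂ := (Q.vol : ℂ)⁻¹ * ∫ x in Q.set, f x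

/-- The `L^p` norm (`p` a real exponent) of `f : ℝⁿ → ℂ`. -/
def lpNorm {n : ℕ} (f : E n → ℂ) (p : ℝ) : ℝ := (eLpNorm f (ENNReal.ofReal p) volume).toReal

/-- `f` is bounded, measurable and compactly supported. -/
def BddCompactSupp {n : ℕ} (f : E n → ℂ) : Prop :=
  Measurable f ∧ HasCompactSupport f ∧ ∃ M : ℝ, ∀ x, ‖f x‖ ≤ M

/-- The pairing `⟨f, g⟩ = ∫ f g`. -/
def pairing {n : ℕ} (f g : E n → ℂ) : ℂ := ∫ x, f x * g x

/-! ### Random dyadic grids -/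

/-- The translation `Σ_{j : 2^{-j} < 2^{-k}} 2^{-j} ω^j` of the grid of scale `2^{-k}`. -/
def gridShift {n : ℕ} (ω : ℤ → Fin n → Bool) (k : ℤ) (i : Fin n) : ℝ :=
  ∑' j : {j : ℤ // k < j}, (2 : ℝ) ^ (-(j.1)) * (if ω j.1 i then 1 else 0)

/-- The shifted dyadic grid `𝒟_ω = {I + ω : I ∈ 𝒟₀}`. -/
def dyadicGrid {n : ℕ} (ω : ℤ → Fin n → Bool) : Set (Cube n) :=
  {Q | ∃ (k : ℤ) (m : Fin n → ℤ), Q.side = (2 : ℝ) ^ (-k) ∧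
    ∀ i, Q.corner i = (m i : ℝ) * (2 : ℝ) ^ (-k) + gridShift ω k i}

/-- A dyadic grid is a translate-type grid `𝒟_ω` of the standard grid. -/
def IsDyadicGrid {n : ℕ} (𝒟 : Set (Cube n)) : Prop := ∃ ω, 𝒟 = dyadicGrid ω

/-- A grid has no quadrants if every strictly increasing chain of cubes exhausts `ℝⁿ`;
equivalently, every cube of the grid and every point are contained in a common bigger
grid cube. -/
def NoQuadrants {n : ℕ} (𝒟 : Set (Cube n)) : Prop :=
  ∀ Q ∈ 𝒟, ∀ x : E n, ∃ R ∈ 𝒟, Q.set ⊆ R.set ∧ x ∈ R.set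

/-- A cube `I` of a grid `𝒟` is good (with parameters `r, γ`) if for every `J ∈ 𝒟` with
`ℓ(J) ≥ 2^r ℓ(I)` one has `d(I, ∂J) > ℓ(I)^γ ℓ(J)^(1-γ)`. -/
def IsGood {n : ℕ} (𝒟 : Set (Cube n)) (r : ℕ) (γ : ℝ) (I : Cube n) : Prop :=
  ∀ J ∈ 𝒟, (2 : ℝ) ^ r * I.side ≤ J.side →
    I.side ^ γ * J.side ^ (1 - γ) < setDist I.clSet (frontier J.set)

/-! ### Haar functions -/

/-- One-dimensional Haar functions on the interval `[a, a+l)`: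
noncancellative (`e = false`) and cancellative (`e = true`). -/
def haar1 (a l : ℝ) (e : Bool) (t : ℝ) : ℝ :=
  if a ≤ t ∧ t < a + l then
    if e then (if t < a + l / 2 then l ^ (-(1 : ℝ) / 2) else -(l ^ (-(1 : ℝ) / 2)))
    else l ^ (-(1 : ℝ) / 2)
  else 0

/-- The Haar function `h_Q^η` of a cube `Q ⊂ ℝⁿ`. It is cancellative iff `η ≠ 0`. -/
def haar {n : ℕ} (Q : Cube n) (η : Fin n → Bool) : E n → ℝ :=
  fun x => ∏ i, haar1 (Q.corner i) Q.side (η i) (x i)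

/-- The pairing `⟨f, h_Q^η⟩`. -/
def haarPairing {n : ℕ} (f : E n → ℂ) (Q : Cube n) (η : Fin n → Bool) : ℂ :=
  ∫ x, f x * (haar Q η x : ℂ)

/-! ### Bilinear Calderón–Zygmund kernels and truncated operators -/


/-- `K` is a (measurable) standard bilinear Calderón–Zygmund kernel on `ℝⁿ` with Hölder
exponent `α` and constant `C`: size bound and Hölder bounds in each of the three
variables, away from the diagonal `Δ = {x = y = z}`. -/
def CZBounds (n : ℕ) (α : ℝ) (K : E n → E n → E n → ℂ) (C : ℝ) : Prop :=
  Measurable (fun p : E n × E n × E n => K p.1 p.2.1 p.2.2) ∧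
  (∀ x y z : E n, ¬(x = y ∧ y = z) →
    ‖K x y z‖ ≤ C / (dist x y + dist x z) ^ (2 * n)) ∧
  (∀ x x' y z : E n, ¬(x = y ∧ y = z) → ¬(x' = y ∧ y = z) →
    dist x x' ≤ max (dist x y) (dist x z) / 2 →
    ‖K x y z - K x' y z‖ ≤ C * dist x x' ^ α / (dist x y + dist x z) ^ (2 * (n : ℝ) + α)) ∧
  (∀ x y y' z : E n, ¬(x = y ∧ y = z) → ¬(x = y' ∧ y' = z) →
    dist y y' ≤ max (dist x y) (dist x z) / 2 →
    ‖K x y z - K x y' z‖ ≤ C * dist y y' ^ α / (dist x y + dist x z) ^ (2 * (n : ℝ) + α)) ∧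
  (∀ x y z z' : E n, ¬(x = y ∧ y = z) → ¬(x = y ∧ y = z') →
    dist z z' ≤ max (dist x y) (dist x z) / 2 →
    ‖K x y z - K x y z'‖ ≤ C * dist z z' ^ α / (dist x y + dist x z) ^ (2 * (n : ℝ) + α))

/-- The truncated bilinear singular integral
`T_ε(f,g)(x) = ∬_{max(|x-y|,|x-z|) > ε} K(x,y,z) f(y) g(z) dy dz`. -/
def truncT {n : ℕ} (K : E n → E n → E n → ℂ) (ε : ℝ) (f g : E n → ℂ) (x : E n) : ℂ :=
  ∫ y, ∫ z, if ε < max (dist x y) (dist x z) then K x y z * f y * g z else 0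

/-- The class `𝒜` of smooth truncation profiles: smooth `φ` with values in `[0,1]`,
vanishing on `[0,1/2]`, equal to `1` on `[1,∞)`, and `‖φ'‖_∞ ≤ 10`. -/
def memA (φ : ℝ → ℝ) : Prop :=
  ContDiff ℝ (⊤ : ℕ∞) φ ∧ (∀ t, φ t ∈ Set.Icc (0 : ℝ) 1) ∧
    (∀ t ≤ (1 : ℝ) / 2, φ t = 0) ∧ (∀ t, (1 : ℝ) ≤ t → φ t = 1) ∧ ∀ t, |deriv φ t| ≤ 10

/-- The smoothly truncated kernel `K_ε^φ(x,y,z) = K(x,y,z) φ((|x-y|+|x-z|)/ε)`. -/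
def smoothK {n : ℕ} (K : E n → E n → E n → ℂ) (φ : ℝ → ℝ) (ε : ℝ) :
    E n → E n → E n → ℂ :=
  fun x y z => K x y z * ((φ ((dist x y + dist x z) / ε) : ℝ) : ℂ)

/-- The smoothly truncated operator `T_ε^φ(f,g)(x) = ∬ K_ε^φ(x,y,z) f(y) g(z) dy dz`. -/
def smoothT {n : ℕ} (K : E n → E n → E n → ℂ) (φ : ℝ → ℝ) (ε : ℝ) (f g : E n → ℂ)
    (x : E n) : ℂ :=
  ∫ y, ∫ z, smoothK K φ ε x y z * f y * g z

/-- The first adjoint kernel, `K^{1*}(x,y,z) = K(y,x,z)`. -/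
def adj1 {n : ℕ} (K : E n → E n → E n → ℂ) : E n → E n → E n → ℂ := fun x y z => K y x z

/-- The second adjoint kernel, `K^{2*}(x,y,z) = K(z,y,x)`. -/
def adj2 {n : ℕ} (K : E n → E n → E n → ℂ) : E n → E n → E n → ℂ := fun x y z => K z y x

/-- `C` is a weak boundedness constant of the bilinear operator `T`:
`|⟨T(1_I,1_I), 1_I⟩| ≤ C |I|` for all cubes `I ⊂ ℝⁿ`. -/
def WBPBound {n : ℕ} (T : (E n → ℂ) → (E n → ℂ) → E n → ℂ) (C : ℝ) : Prop :=
  ∀ Q : Cube n, ‖∫ x in Q.set, T (indC Q) (indC Q) x‖ ≤ C * Q.vol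

/-! ### The `BMO` pairings `⟨T_ε(1,1), φ₀⟩` and testing conditions -/

/-- The pairing `⟨T_ε(1,1), φ₀⟩`, defined (for `φ₀` supported in the cube `R`, with mean
zero, and `c ≥ 3` a dilation factor) as
`⟨T_ε(1_{cR},1_{cR}), φ₀⟩ + ∭ (K(x,y,z) - K(c_R,y,z)) 1_{(cR×cR)ᶜ}(y,z) φ₀(x) dy dz dx`. -/
def bmoPairing {n : ℕ} (K : E n → E n → E n → ℂ) (ε : ℝ) (φ₀ : E n → ℂ) (R : Cube n)
    (c : ℝ) : ℂ :=
  (∫ x, truncT K ε (indC (R.dilate c)) (indC (R.dilate c)) x * φ₀ x) +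
    ∫ x, φ₀ x * ∫ y, ∫ z,
      if y ∈ (R.dilate c).set ∧ z ∈ (R.dilate c).set then 0
      else K x y z - K R.center y z

/-- The pairing `⟨T_ε^{1*}(1,1), φ₀⟩ = ⟨T_ε(φ₀, 1_{cR}), 1_{cR}⟩ + (correction with K^{1*})`. -/
def bmoPairing1 {n : ℕ} (K : E n → E n → E n → ℂ) (ε : ℝ) (φ₀ : E n → ℂ) (R : Cube n)
    (c : ℝ) : ℂ :=
  (∫ x, truncT K ε φ₀ (indC (R.dilate c)) x * indC (R.dilate c) x) +
    ∫ x, φ₀ x * ∫ y, ∫ z,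
      if y ∈ (R.dilate c).set ∧ z ∈ (R.dilate c).set then 0
      else adj1 K x y z - adj1 K R.center y z

/-- The pairing `⟨T_ε^{2*}(1,1), φ₀⟩ = ⟨T_ε(1_{cR}, φ₀), 1_{cR}⟩ + (correction with K^{2*})`. -/
def bmoPairing2 {n : ℕ} (K : E n → E n → E n → ℂ) (ε : ℝ) (φ₀ : E n → ℂ) (R : Cube n)
    (c : ℝ) : ℂ :=
  (∫ x, truncT K ε (indC (R.dilate c)) φ₀ x * indC (R.dilate c) x) +
    ∫ x, φ₀ x * ∫ y, ∫ z,
      if y ∈ (R.dilate c).set ∧ z ∈ (R.dilate c).set then 0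
      else adj2 K x y z - adj2 K R.center y z

/-- `B` is an admissible `BMO` bound for `T_ε(1,1)`: `|⟨T_ε(1,1), φ₀⟩| ≤ B |R|`
over all admissible testing data. -/
def BMOBound {n : ℕ} (K : E n → E n → E n → ℂ) (ε : ℝ) (B : ℝ) : Prop :=
  ∀ (R : Cube n) (φ₀ : E n → ℂ), Measurable φ₀ → Function.support φ₀ ⊆ R.clSet →
    (∀ x, ‖φ₀ x‖ ≤ 1) → (∫ x, φ₀ x) = 0 →
    ∀ c : ℝ, 3 ≤ c → ε < 2⁻¹ * (c - 1) * R.side →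
      ‖bmoPairing K ε φ₀ R c‖ ≤ B * R.vol

/-- `B` is an admissible `BMO` bound for `T_ε^{1*}(1,1)`. -/
def BMOBound1 {n : ℕ} (K : E n → E n → E n → ℂ) (ε : ℝ) (B : ℝ) : Prop :=
  ∀ (R : Cube n) (φ₀ : E n → ℂ), Measurable φ₀ → Function.support φ₀ ⊆ R.clSet →
    (∀ x, ‖φ₀ x‖ ≤ 1) → (∫ x, φ₀ x) = 0 →
    ∀ c : ℝ, 3 ≤ c → ε < 2⁻¹ * (c - 1) * R.side →
      ‖bmoPairing1 K ε φ₀ R c‖ ≤ B * R.vol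

/-- `B` is an admissible `BMO` bound for `T_ε^{2*}(1,1)`. -/
def BMOBound2 {n : ℕ} (K : E n → E n → E n → ℂ) (ε : ℝ) (B : ℝ) : Prop :=
  ∀ (R : Cube n) (φ₀ : E n → ℂ), Measurable φ₀ → Function.support φ₀ ⊆ R.clSet →
    (∀ x, ‖φ₀ x‖ ≤ 1) → (∫ x, φ₀ x) = 0 →
    ∀ c : ℝ, 3 ≤ c → ε < 2⁻¹ * (c - 1) * R.side →
      ‖bmoPairing2 K ε φ₀ R c‖ ≤ B * R.vol

/-! ### Sparse collections -/

/-- A collection `𝒮` of cubes is `η`-sparse: every `Q ∈ 𝒮` carries a major measurable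
subset `E_Q ⊆ Q` with `|E_Q| > η |Q|`, the sets `E_Q` being pairwise disjoint. -/
def IsSparse {n : ℕ} (η : ℝ) (𝒮 : Set (Cube n)) : Prop :=
  ∃ Esel : Cube n → Set (E n),
    (∀ Q ∈ 𝒮, MeasurableSet (Esel Q) ∧ Esel Q ⊆ Q.set ∧
      ENNReal.ofReal (η * Q.vol) < MeasureTheory.volume (Esel Q)) ∧
    𝒮.Pairwise fun Q R => Disjoint (Esel Q) (Esel R)

/-- The sparse form `Λ_𝒮(f₁,f₂,f₃) = Σ_{Q ∈ 𝒮} |Q| ⟨|f₁|⟩_Q ⟨|f₂|⟩_Q ⟨|f₃|⟩_Q`. -/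
def sparseForm {n : ℕ} (𝒮 : Set (Cube n)) (f₁ f₂ f₃ : E n → ℂ) : ℝ :=
  ∑' Q : 𝒮, (Q : Cube n).vol * avgAbs Q f₁ * avgAbs Q f₂ * avgAbs Q f₃

/-! ### Bilinear dyadic shifts and paraproducts, as trilinear forms -/

/-- A trilinear form on functions on `ℝⁿ`. -/
abbrev TriForm (n : ℕ) : Type := (E n → ℂ) → (E n → ℂ) → (E n → ℂ) → ℂ

/-- The index set of a bilinear dyadic shift of complexity `(i,j,k)` in the grid `𝒟`:
tuples of cubes `I, J, K ⊆ Q` of `𝒟` with `ℓ(I) = 2^{-i} ℓ(Q)`, `ℓ(J) = 2^{-j} ℓ(Q)`,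
`ℓ(K) = 2^{-k} ℓ(Q)`, together with Haar signatures, `h_K` being cancellative and at most
one of `h_I, h_J` being noncancellative. -/
structure ShiftIndex (n : ℕ) (𝒟 : Set (Cube n)) (i j k : ℕ) where
  Q : Cube n
  I : Cube n
  J : Cube n
  K : Cube n
  ηf : Fin n → Bool
  ηg : Fin n → Bool
  ηh : Fin n → Bool
  memQ : Q ∈ 𝒟
  memI : I ∈ 𝒟
  memJ : J ∈ 𝒟
  memK : K ∈ 𝒟
  subI : I.set ⊆ Q.set
  subJ : J.set ⊆ Q.set
  subK : K.set ⊆ Q.set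
  sideI : I.side = Q.side / 2 ^ i
  sideJ : J.side = Q.side / 2 ^ j
  sideK : K.side = Q.side / 2 ^ k
  cancel_h : ηh ≠ fun _ => false
  cancel_fg : ¬(ηf = (fun _ => false) ∧ ηg = (fun _ => false))

/-- `Λ` is (the trilinear form of) a cancellative bilinear dyadic shift of complexity
`(i,j,k)` in the grid `𝒟`: `Λ(f,g,h) = Σ α_{I,J,K,Q} ⟨f, h̃_I⟩ ⟨g, h̃_J⟩ ⟨h, h_K⟩`
with `|α_{I,J,K,Q}| ≤ |I|^{1/2} |J|^{1/2} |K|^{1/2} / |Q|²`. -/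
def IsShiftForm {n : ℕ} (𝒟 : Set (Cube n)) (i j k : ℕ) (Λ : TriForm n) : Prop :=
  ∃ α : ShiftIndex n 𝒟 i j k → ℂ,
    (∀ t, ‖α t‖ ≤ Real.sqrt (t.I.vol * t.J.vol * t.K.vol) / t.Q.vol ^ 2) ∧
    ∀ f g h, Λ f g h =
      ∑' t : ShiftIndex n 𝒟 i j k,
        α t * haarPairing f t.I t.ηf * haarPairing g t.J t.ηg * haarPairing h t.K t.ηh

/-- `Λ` is a cancellative bilinear shift of complexity `(i,i,k)` or `(i,i+1,k)` in `𝒟`,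
or an adjoint (`⟨S^{1*}(f,g),h⟩ = ⟨S(h,g),f⟩`, `⟨S^{2*}(f,g),h⟩ = ⟨S(f,h),g⟩`) of such. -/
def IsExtShiftForm {n : ℕ} (𝒟 : Set (Cube n)) (i k : ℕ) (Λ : TriForm n) : Prop :=
  ∃ Λ₀ : TriForm n, (IsShiftForm 𝒟 i i k Λ₀ ∨ IsShiftForm 𝒟 i (i + 1) k Λ₀) ∧
    ((∀ f g h, Λ f g h = Λ₀ f g h) ∨ (∀ f g h, Λ f g h = Λ₀ h g f) ∨
      (∀ f g h, Λ f g h = Λ₀ f h g))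

/-- The index set of a bilinear paraproduct in the grid `𝒟`: cubes `K ∈ 𝒟` with a
cancellative Haar signature. -/
structure ParaIndex (n : ℕ) (𝒟 : Set (Cube n)) where
  K : Cube n
  η : Fin n → Bool
  mem : K ∈ 𝒟
  cancel : η ≠ fun _ => false

/-- `Λ` is (the trilinear form of) a bilinear paraproduct
`Π_β(f,g) = Σ_K β_K ⟨f⟩_K ⟨g⟩_K h_K` in the grid `𝒟`, with coefficients satisfying the
Carleson normalization `Σ_{K ⊆ K₀} |β_K|² ≤ |K₀|` for all `K₀ ∈ 𝒟`. -/
def IsParaForm {n : ℕ} (𝒟 : Set (Cube n)) (Λ : TriForm n) : Prop :=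
  ∃ β : ParaIndex n 𝒟 → ℂ,
    (∀ K₀ ∈ 𝒟, (∑' t : {t : ParaIndex n 𝒟 // t.K.set ⊆ K₀.set},
        ((‖β t.1‖₊ : ℝ≥0∞) ^ 2)) ≤ ENNReal.ofReal K₀.vol) ∧
    ∀ f g h, Λ f g h =
      ∑' t : ParaIndex n 𝒟, β t * avg t.K f * avg t.K g * haarPairing h t.K t.η

/-! ### Auxiliary material for Statement 9 -/

section WBPAux

open Metric

variable {n : ℕ}

lemma cube_set_eq_pi (Q : Cube n) :
    Q.set = Set.univ.pi fun i => Set.Ico (Q.corner i) (Q.corner i + Q.side) := by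
  ext x; simp [Cube.set, Set.mem_Ico]

lemma cube_measurableSet (Q : Cube n) : MeasurableSet Q.set := by
  rw [cube_set_eq_pi]; exact MeasurableSet.univ_pi fun i => measurableSet_Ico

lemma cube_vol_pos (Q : Cube n) : 0 < Q.vol := pow_pos Q.side_pos n

lemma cube_volume_set (Q : Cube n) : volume Q.set = ENNReal.ofReal Q.vol := by
  rw [cube_set_eq_pi, volume_pi_pi]
  simp only [Real.volume_Ico, add_sub_cancel_left, Finset.prod_const, Finset.card_univ,
    Fintype.card_fin]
  rw [← ENNReal.ofReal_pow Q.side_pos.le]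
  rfl

lemma cube_volume_lt_top (Q : Cube n) : volume Q.set < ⊤ := by
  rw [cube_volume_set]; exact ENNReal.ofReal_lt_top

lemma cube_volume_toReal (Q : Cube n) : (volume Q.set).toReal = Q.vol := by
  rw [cube_volume_set, ENNReal.toReal_ofReal (cube_vol_pos Q).le]

lemma measurable_indC (Q : Cube n) : Measurable (indC Q) :=
  Measurable.ite (cube_measurableSet Q) measurable_const measurable_const

lemma norm_indC (Q : Cube n) (y : E n) :
    ‖indC Q y‖ = if y ∈ Q.set then (1 : ℝ) else 0 := by
  unfold indC; split <;> simp

/-- The sharp-truncation integrand. -/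
def Gm (K : E n → E n → E n → ℂ) (ε : ℝ) (Q : Cube n) (x y z : E n) : ℂ :=
  if ε < max (dist x y) (dist x z) then K x y z * indC Q y * indC Q z else 0

/-- The smooth-truncation integrand. -/
def Fm (K : E n → E n → E n → ℂ) (φ : ℝ → ℝ) (ε : ℝ) (Q : Cube n) (x y z : E n) : ℂ :=
  smoothK K φ ε x y z * indC Q y * indC Q z

lemma smoothT_indC (K : E n → E n → E n → ℂ) (φ : ℝ → ℝ) (ε : ℝ) (Q : Cube n) (x : E n) :
    smoothT K φ ε (indC Q) (indC Q) x = ∫ y, ∫ z, Fm K φ ε Q x y z := rfl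

lemma truncT_indC (K : E n → E n → E n → ℂ) (ε : ℝ) (Q : Cube n) (x : E n) :
    truncT K ε (indC Q) (indC Q) x = ∫ y, ∫ z, Gm K ε Q x y z := rfl

/-- The main single-`ε` estimate. -/
lemma setIntegral_smoothT_bound {α : ℝ} {K : E n → E n → E n → ℂ} {CK : ℝ}
    (hK : CZBounds n α K CK) (hCK : 0 ≤ CK) {φ : ℝ → ℝ} (hφ : memA φ)
    {ε : ℝ} (hε : 0 < ε) {W : ℝ} (hW : WBPBound (truncT K ε) W) (Q : Cube n) :
    IntegrableOn (smoothT K φ ε (indC Q) (indC Q)) Q.set volume ∧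
      ‖∫ x in Q.set, smoothT K φ ε (indC Q) (indC Q) x‖
        ≤ (CK * 4 ^ (2 * n) + W) * Q.vol := by
  obtain ⟨hφsm, hφ01, hφ0, hφ1, -⟩ := hφ
  set c : ℝ := CK * (2 / ε) ^ (2 * n) with hc_def
  have hc : 0 ≤ c := mul_nonneg hCK (pow_nonneg (by positivity) _)
  -- indicator helpers
  set iQ : E n → ℝ := fun y => if y ∈ Q.set then (1 : ℝ) else 0 with hiQ_def
  have hiQ0 : ∀ y, 0 ≤ iQ y := fun y => by simp only [hiQ_def]; split <;> norm_num
  have hiQ1 : ∀ y, iQ y ≤ 1 := fun y => by simp only [hiQ_def]; split <;> norm_num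
  set iB : E n → E n → ℝ := fun x y => if y ∈ closedBall x ε then (1 : ℝ) else 0 with hiB_def
  have hiB0 : ∀ x y, 0 ≤ iB x y := fun x y => by simp only [hiB_def]; split <;> norm_num
  -- size bound away from scale ε/2
  have hKb : ∀ x y z : E n, ε / 2 < dist x y + dist x z → ‖K x y z‖ ≤ c := by
    intro x y z hs
    have hs0 : (0 : ℝ) < dist x y + dist x z := lt_trans (by positivity) hs
    have hnd : ¬(x = y ∧ y = z) := by
      rintro ⟨rfl, rfl⟩; simp at hs0
    refine (hK.2.1 x y z hnd).trans ?_
    have h1 : (ε / 2) ^ (2 * n) ≤ (dist x y + dist x z) ^ (2 * n) :=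
      pow_le_pow_left₀ (by positivity) hs.le _
    calc CK / (dist x y + dist x z) ^ (2 * n) ≤ CK / (ε / 2) ^ (2 * n) :=
          div_le_div_of_nonneg_left hCK (by positivity) h1
      _ = c := by rw [hc_def, div_eq_mul_inv, ← inv_pow, inv_div]
  -- pointwise bounds
  have hF : ∀ x y z : E n, ‖Fm K φ ε Q x y z‖ ≤ c * iQ y * iQ z := by
    intro x y z
    have hnorm : ‖Fm K φ ε Q x y z‖ = ‖smoothK K φ ε x y z‖ * iQ y * iQ z := by
      rw [Fm, norm_mul, norm_mul, norm_indC, norm_indC]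
    rw [hnorm]
    have hsK : ‖smoothK K φ ε x y z‖ ≤ c := by
      rw [smoothK, norm_mul]
      by_cases hb : (dist x y + dist x z) / ε ≤ 1 / 2
      · rw [hφ0 _ hb]; simpa using hc
      · push_neg at hb
        have hs2 : ε / 2 < dist x y + dist x z := by
          have := (lt_div_iff₀ hε).1 hb; linarith
        have hφle : ‖((φ ((dist x y + dist x z) / ε) : ℝ) : ℂ)‖ ≤ 1 := by
          rw [Complex.norm_real, Real.norm_eq_abs, abs_le]
          have := hφ01 ((dist x y + dist x z) / ε)
          exact ⟨by linarith [this.1], this.2⟩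
        calc ‖K x y z‖ * ‖((φ ((dist x y + dist x z) / ε) : ℝ) : ℂ)‖ ≤ c * 1 :=
              mul_le_mul (hKb x y z hs2) hφle (norm_nonneg _) hc
          _ = c := mul_one c
    exact mul_le_mul_of_nonneg_right
      (mul_le_mul_of_nonneg_right hsK (hiQ0 y)) (hiQ0 z)
  have hG : ∀ x y z : E n, ‖Gm K ε Q x y z‖ ≤ c * iQ y * iQ z := by
    intro x y z
    by_cases hb : ε < max (dist x y) (dist x z)
    · have hmax : max (dist x y) (dist x z) ≤ dist x y + dist x z :=
        max_le (le_add_of_nonneg_right dist_nonneg) (le_add_of_nonneg_left dist_nonneg)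
      have hs2 : ε / 2 < dist x y + dist x z := by linarith
      have : ‖Gm K ε Q x y z‖ = ‖K x y z‖ * iQ y * iQ z := by
        rw [Gm, if_pos hb, norm_mul, norm_mul, norm_indC, norm_indC]
      rw [this]
      exact mul_le_mul_of_nonneg_right
        (mul_le_mul_of_nonneg_right (hKb x y z hs2) (hiQ0 y)) (hiQ0 z)
    · have : Gm K ε Q x y z = 0 := if_neg hb
      rw [this, norm_zero]
      exact mul_nonneg (mul_nonneg hc (hiQ0 y)) (hiQ0 z)
  have hFG : ∀ x y z : E n, ‖Fm K φ ε Q x y z - Gm K ε Q x y z‖ ≤ c * iB x y * iB x z := by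
    intro x y z
    by_cases hb : ε < max (dist x y) (dist x z)
    · have hmax : max (dist x y) (dist x z) ≤ dist x y + dist x z :=
        max_le (le_add_of_nonneg_right dist_nonneg) (le_add_of_nonneg_left dist_nonneg)
      have hs : (1 : ℝ) ≤ (dist x y + dist x z) / ε := by
        rw [le_div_iff₀ hε]; linarith
      have heq : Fm K φ ε Q x y z = Gm K ε Q x y z := by
        rw [Fm, Gm, if_pos hb, smoothK, hφ1 _ hs]
        push_cast; ring
      rw [heq, sub_self, norm_zero]
      exact mul_nonneg (mul_nonneg hc (hiB0 x y)) (hiB0 x z)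
    · push_neg at hb
      have hy : y ∈ closedBall x ε := by
        rw [mem_closedBall, dist_comm]
        exact le_trans (le_max_left _ _) hb
      have hz : z ∈ closedBall x ε := by
        rw [mem_closedBall, dist_comm]
        exact le_trans (le_max_right _ _) hb
      have hGz : Gm K ε Q x y z = 0 := if_neg (not_lt.2 hb)
      rw [hGz, sub_zero]
      calc ‖Fm K φ ε Q x y z‖ ≤ c * iQ y * iQ z := hF x y z
        _ ≤ c * 1 * 1 := mul_le_mul
            (mul_le_mul_of_nonneg_left (hiQ1 y) hc) (hiQ1 z) (hiQ0 z)
            (by simpa using hc)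
        _ = c * iB x y * iB x z := by
            simp only [hiB_def, if_pos hy, if_pos hz]
  -- measurability
  have mindC : Measurable (indC Q) := measurable_indC Q
  have mFfull : Measurable (fun p : E n × E n × E n => Fm K φ ε Q p.1 p.2.1 p.2.2) := by
    have cts : Continuous (fun p : E n × E n × E n =>
        ((φ ((dist p.1 p.2.1 + dist p.1 p.2.2) / ε) : ℝ) : ℂ)) := by
      apply Complex.continuous_ofReal.comp
      apply hφsm.continuous.comp
      exact ((continuous_fst.dist (continuous_snd.fst)).add
        (continuous_fst.dist (continuous_snd.snd))).div_const ε
    simp only [Fm, smoothK]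
    exact ((hK.1.mul cts.measurable).mul
      (mindC.comp measurable_snd.fst)).mul
      (mindC.comp measurable_snd.snd)
  have mGfull : Measurable (fun p : E n × E n × E n => Gm K ε Q p.1 p.2.1 p.2.2) := by
    simp only [Gm]
    have hmax : Measurable (fun p : E n × E n × E n =>
        max (dist p.1 p.2.1) (dist p.1 p.2.2)) :=
      ((continuous_fst.dist (continuous_snd.fst)).max
        (continuous_fst.dist (continuous_snd.snd))).measurable
    exact Measurable.ite (measurableSet_lt measurable_const hmax)
      (((hK.1.mul (mindC.comp measurable_snd.fst)).mul (mindC.comp measurable_snd.snd)))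
      measurable_const
  -- iterated-integral measurability
  have mF2 : StronglyMeasurable (fun p : E n × E n => ∫ z, Fm K φ ε Q p.1 p.2 z) := by
    have hg : Measurable (fun q : (E n × E n) × E n => (q.1.1, q.1.2, q.2)) :=
      (measurable_fst.fst).prodMk ((measurable_fst.snd).prodMk measurable_snd)
    have h : Measurable (fun q : (E n × E n) × E n => Fm K φ ε Q q.1.1 q.1.2 q.2) := by
      have := mFfull.comp hg
      exact this
    have h2 := h.stronglyMeasurable.integral_prod_right' (ν := volume)
    exact h2
  have mF1 : StronglyMeasurable (fun x : E n => ∫ y, ∫ z, Fm K φ ε Q x y z) := by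
    have h2 := mF2.integral_prod_right' (ν := volume)
    exact h2
  have mG2 : StronglyMeasurable (fun p : E n × E n => ∫ z, Gm K ε Q p.1 p.2 z) := by
    have hg : Measurable (fun q : (E n × E n) × E n => (q.1.1, q.1.2, q.2)) :=
      (measurable_fst.fst).prodMk ((measurable_fst.snd).prodMk measurable_snd)
    have h : Measurable (fun q : (E n × E n) × E n => Gm K ε Q q.1.1 q.1.2 q.2) := by
      have := mGfull.comp hg
      exact this
    have h2 := h.stronglyMeasurable.integral_prod_right' (ν := volume)
    exact h2
  have mG1 : StronglyMeasurable (fun x : E n => ∫ y, ∫ z, Gm K ε Q x y z) := by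
    have h2 := mG2.integral_prod_right' (ν := volume)
    exact h2
  -- integrable dominators
  have hdomQ : ∀ C : ℝ, Integrable (fun y : E n => C * iQ y) volume := by
    intro C
    have heq : (fun y : E n => C * iQ y) = Q.set.indicator (fun _ => C) := by
      funext y; simp only [hiQ_def, Set.indicator]; split <;> simp
    rw [heq]
    exact (integrable_indicator_iff (cube_measurableSet Q)).2
      (integrableOn_const (cube_volume_lt_top Q).ne)
  have hintQ : ∀ C : ℝ, (∫ y : E n, C * iQ y) = C * Q.vol := by
    intro C
    have heq : (fun y : E n => C * iQ y) = Q.set.indicator (fun _ => C) := by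
      funext y; simp only [hiQ_def, Set.indicator]; split <;> simp
    rw [heq, integral_indicator_const C (cube_measurableSet Q), measureReal_def, cube_volume_set,
      ENNReal.toReal_ofReal (cube_vol_pos Q).le, smul_eq_mul, mul_comm]
  have hdomB : ∀ (x : E n) (C : ℝ), Integrable (fun y : E n => C * iB x y) volume := by
    intro x C
    have heq : (fun y : E n => C * iB x y) = (closedBall x ε).indicator (fun _ => C) := by
      funext y; simp only [hiB_def, Set.indicator]; split <;> simp
    rw [heq]
    exact (integrable_indicator_iff measurableSet_closedBall).2
      (integrableOn_const measure_closedBall_lt_top.ne)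
  have hvolB : ∀ x : E n, (volume (closedBall x ε)).toReal = (2 * ε) ^ n := by
    intro x
    rw [closedBall_pi x hε.le, volume_pi_pi]
    simp only [Real.volume_closedBall, Finset.prod_const, Finset.card_univ, Fintype.card_fin]
    rw [← ENNReal.ofReal_pow (by positivity), ENNReal.toReal_ofReal (by positivity)]
  have hintB : ∀ (x : E n) (C : ℝ), (∫ y : E n, C * iB x y) = C * (2 * ε) ^ n := by
    intro x C
    have heq : (fun y : E n => C * iB x y) = (closedBall x ε).indicator (fun _ => C) := by
      funext y; simp only [hiB_def, Set.indicator]; split <;> simp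
    rw [heq, integral_indicator_const C measurableSet_closedBall, measureReal_def, hvolB, smul_eq_mul, mul_comm]
  -- integrability of inner integrals
  have intFz : ∀ x y : E n, Integrable (fun z => Fm K φ ε Q x y z) volume := by
    intro x y
    refine Integrable.mono' (hdomQ c)
      ((mFfull.comp (measurable_const.prodMk
        (measurable_const.prodMk measurable_id))).aestronglyMeasurable)
      (ae_of_all _ fun z => ?_)
    calc ‖Fm K φ ε Q x y z‖ ≤ c * iQ y * iQ z := hF x y z
      _ ≤ c * 1 * iQ z :=
        mul_le_mul_of_nonneg_right (mul_le_mul_of_nonneg_left (hiQ1 y) hc) (hiQ0 z)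
      _ = c * iQ z := by ring
  have intGz : ∀ x y : E n, Integrable (fun z => Gm K ε Q x y z) volume := by
    intro x y
    refine Integrable.mono' (hdomQ c)
      ((mGfull.comp (measurable_const.prodMk
        (measurable_const.prodMk measurable_id))).aestronglyMeasurable)
      (ae_of_all _ fun z => ?_)
    calc ‖Gm K ε Q x y z‖ ≤ c * iQ y * iQ z := hG x y z
      _ ≤ c * 1 * iQ z :=
        mul_le_mul_of_nonneg_right (mul_le_mul_of_nonneg_left (hiQ1 y) hc) (hiQ0 z)
      _ = c * iQ z := by ring
  -- bounds for inner integrals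
  have hFy : ∀ x y : E n, ‖∫ z, Fm K φ ε Q x y z‖ ≤ (c * Q.vol) * iQ y := by
    intro x y
    calc ‖∫ z, Fm K φ ε Q x y z‖ ≤ ∫ z, ‖Fm K φ ε Q x y z‖ := norm_integral_le_integral_norm _
      _ ≤ ∫ z, (c * iQ y) * iQ z :=
        integral_mono_of_nonneg (ae_of_all _ fun z => norm_nonneg _)
          (hdomQ (c * iQ y)) (ae_of_all _ fun z => hF x y z)
      _ = (c * iQ y) * Q.vol := hintQ _
      _ = (c * Q.vol) * iQ y := by ring
  have hGy : ∀ x y : E n, ‖∫ z, Gm K ε Q x y z‖ ≤ (c * Q.vol) * iQ y := by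
    intro x y
    calc ‖∫ z, Gm K ε Q x y z‖ ≤ ∫ z, ‖Gm K ε Q x y z‖ := norm_integral_le_integral_norm _
      _ ≤ ∫ z, (c * iQ y) * iQ z :=
        integral_mono_of_nonneg (ae_of_all _ fun z => norm_nonneg _)
          (hdomQ (c * iQ y)) (ae_of_all _ fun z => hG x y z)
      _ = (c * iQ y) * Q.vol := hintQ _
      _ = (c * Q.vol) * iQ y := by ring
  have intFy : ∀ x : E n, Integrable (fun y => ∫ z, Fm K φ ε Q x y z) volume := by
    intro x
    exact Integrable.mono' (hdomQ (c * Q.vol))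
      ((mF2.comp_measurable measurable_prodMk_left).aestronglyMeasurable)
      (ae_of_all _ fun y => hFy x y)
  have intGy : ∀ x : E n, Integrable (fun y => ∫ z, Gm K ε Q x y z) volume := by
    intro x
    exact Integrable.mono' (hdomQ (c * Q.vol))
      ((mG2.comp_measurable measurable_prodMk_left).aestronglyMeasurable)
      (ae_of_all _ fun y => hGy x y)
  -- bound on the sharp truncation
  have hTb : ∀ x : E n, ‖∫ y, ∫ z, Gm K ε Q x y z‖ ≤ c * Q.vol * Q.vol := by
    intro x
    calc ‖∫ y, ∫ z, Gm K ε Q x y z‖ ≤ ∫ y, ‖∫ z, Gm K ε Q x y z‖ :=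
          norm_integral_le_integral_norm _
      _ ≤ ∫ y, (c * Q.vol) * iQ y :=
        integral_mono_of_nonneg (ae_of_all _ fun y => norm_nonneg _)
          (hdomQ (c * Q.vol)) (ae_of_all _ fun y => hGy x y)
      _ = (c * Q.vol) * Q.vol := hintQ _
  -- bound on the difference D
  have hDb : ∀ x : E n,
      ‖(∫ y, ∫ z, Fm K φ ε Q x y z) - ∫ y, ∫ z, Gm K ε Q x y z‖ ≤ CK * 4 ^ (2 * n) := by
    intro x
    rw [← integral_sub (intFy x) (intGy x)]
    have h2 : ∀ y, ‖(∫ z, Fm K φ ε Q x y z) - ∫ z, Gm K ε Q x y z‖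
        ≤ (c * (2 * ε) ^ n) * iB x y := by
      intro y
      rw [← integral_sub (intFz x y) (intGz x y)]
      calc ‖∫ z, (Fm K φ ε Q x y z - Gm K ε Q x y z)‖
          ≤ ∫ z, ‖Fm K φ ε Q x y z - Gm K ε Q x y z‖ := norm_integral_le_integral_norm _
        _ ≤ ∫ z, (c * iB x y) * iB x z :=
          integral_mono_of_nonneg (ae_of_all _ fun z => norm_nonneg _)
            (hdomB x (c * iB x y)) (ae_of_all _ fun z => hFG x y z)
        _ = (c * iB x y) * (2 * ε) ^ n := hintB x _
        _ = (c * (2 * ε) ^ n) * iB x y := by ring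
    calc ‖∫ y, ((∫ z, Fm K φ ε Q x y z) - ∫ z, Gm K ε Q x y z)‖
        ≤ ∫ y, ‖(∫ z, Fm K φ ε Q x y z) - ∫ z, Gm K ε Q x y z‖ :=
          norm_integral_le_integral_norm _
      _ ≤ ∫ y, (c * (2 * ε) ^ n) * iB x y :=
        integral_mono_of_nonneg (ae_of_all _ fun y => norm_nonneg _)
          (hdomB x _) (ae_of_all _ h2)
      _ = (c * (2 * ε) ^ n) * (2 * ε) ^ n := hintB x _
      _ = CK * 4 ^ (2 * n) := by
          have hεne : ε ≠ 0 := hε.ne'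
          have h4 : (2 / ε) * (2 * ε) = 4 := by
            field_simp
            ring
          have hpow : ((2:ℝ) * ε) ^ n * (2 * ε) ^ n = (2 * ε) ^ (2 * n) := by
            rw [← pow_add, two_mul n]
          rw [hc_def, mul_assoc, mul_assoc, hpow, ← mul_pow, h4]
  -- integrability over Q of the two operators
  have intT : IntegrableOn (truncT K ε (indC Q) (indC Q)) Q.set volume := by
    refine Integrable.mono'
      (integrableOn_const (C := c * Q.vol * Q.vol) (cube_volume_lt_top Q).ne)
      ((mG1.aestronglyMeasurable).restrict) (ae_of_all _ fun x => ?_)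
    exact hTb x
  have intS : IntegrableOn (smoothT K φ ε (indC Q) (indC Q)) Q.set volume := by
    refine Integrable.mono'
      (integrableOn_const (C := CK * 4 ^ (2 * n) + c * Q.vol * Q.vol)
        (cube_volume_lt_top Q).ne)
      ((mF1.aestronglyMeasurable).restrict) (ae_of_all _ fun x => ?_)
    calc ‖smoothT K φ ε (indC Q) (indC Q) x‖
        = ‖((∫ y, ∫ z, Fm K φ ε Q x y z) - ∫ y, ∫ z, Gm K ε Q x y z)
            + ∫ y, ∫ z, Gm K ε Q x y z‖ := by
          have heq : smoothT K φ ε (indC Q) (indC Q) x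
              = ((∫ y, ∫ z, Fm K φ ε Q x y z) - ∫ y, ∫ z, Gm K ε Q x y z)
                + ∫ y, ∫ z, Gm K ε Q x y z := by
            rw [smoothT_indC]; ring
          rw [heq]
      _ ≤ ‖(∫ y, ∫ z, Fm K φ ε Q x y z) - ∫ y, ∫ z, Gm K ε Q x y z‖
            + ‖∫ y, ∫ z, Gm K ε Q x y z‖ := norm_add_le _ _
      _ ≤ CK * 4 ^ (2 * n) + c * Q.vol * Q.vol := add_le_add (hDb x) (hTb x)
  refine ⟨intS, ?_⟩
  -- split the integral
  have hsplit : ∫ x in Q.set, smoothT K φ ε (indC Q) (indC Q) x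
      = (∫ x in Q.set, (smoothT K φ ε (indC Q) (indC Q) x
          - truncT K ε (indC Q) (indC Q) x))
        + ∫ x in Q.set, truncT K ε (indC Q) (indC Q) x := by
    rw [integral_sub intS intT]; ring
  rw [hsplit]
  have hD : ‖∫ x in Q.set, (smoothT K φ ε (indC Q) (indC Q) x
      - truncT K ε (indC Q) (indC Q) x)‖ ≤ CK * 4 ^ (2 * n) * Q.vol := by
    have := norm_setIntegral_le_of_norm_le_const (cube_volume_lt_top Q)
      (fun x _ => by
        show ‖smoothT K φ ε (indC Q) (indC Q) x - truncT K ε (indC Q) (indC Q) x‖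
          ≤ CK * 4 ^ (2 * n)
        rw [smoothT_indC, truncT_indC]; exact hDb x)
    rwa [measureReal_def, cube_volume_toReal] at this
  calc ‖(∫ x in Q.set, (smoothT K φ ε (indC Q) (indC Q) x
        - truncT K ε (indC Q) (indC Q) x))
      + ∫ x in Q.set, truncT K ε (indC Q) (indC Q) x‖
      ≤ ‖∫ x in Q.set, (smoothT K φ ε (indC Q) (indC Q) x
          - truncT K ε (indC Q) (indC Q) x)‖
        + ‖∫ x in Q.set, truncT K ε (indC Q) (indC Q) x‖ := norm_add_le _ _
    _ ≤ CK * 4 ^ (2 * n) * Q.vol + W * Q.vol := add_le_add hD (hW Q)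
    _ = (CK * 4 ^ (2 * n) + W) * Q.vol := by ring

end WBPAux

/-- weak boundedness of the smoothly truncated difference:
`‖T^φ_{ε₁,ε₂}‖_WBP ≤ C(n) (‖K‖_{CZ_α} + ‖T_{ε₁}‖_WBP + ‖T_{ε₂}‖_WBP)`. -/
theorem wbp_of_smooth_truncation_difference (n : ℕ) (hn : 0 < n) :
    ∃ C : ℝ, 0 < C ∧
      ∀ α : ℝ, α ∈ Set.Ioc (0 : ℝ) 1 →
      ∀ (K : E n → E n → E n → ℂ) (CK : ℝ), CZBounds n α K CK →
      ∀ φ : ℝ → ℝ, memA φ →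
      ∀ ε₁ ε₂ : ℝ, 0 < ε₁ → ε₁ < ε₂ →
      ∀ W₁ W₂ : ℝ, WBPBound (truncT K ε₁) W₁ → WBPBound (truncT K ε₂) W₂ →
        WBPBound (fun f g x => smoothT K φ ε₁ f g x - smoothT K φ ε₂ f g x)
          (C * (CK + W₁ + W₂)) := by
  refine ⟨2 * 4 ^ (2 * n) + 1, by positivity, ?_⟩
  intro α hα K CK hK φ hφ ε₁ ε₂ hε₁ hε12 W₁ W₂ hW₁ hW₂
  -- `CK` is nonnegative
  have hCK : 0 ≤ CK := by
    have i : Fin n := ⟨0, hn⟩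
    set x : E n := fun _ => 0 with hx
    set y : E n := fun _ => 1 with hy
    have hxy : x ≠ y := by
      intro h
      have := congrFun h i
      simp [hx, hy] at this
    have hnd : ¬(x = y ∧ y = y) := fun h => hxy h.1
    have hb := hK.2.1 x y y hnd
    have hd : 0 < dist x y := dist_pos.2 hxy
    have hp : (0 : ℝ) < (dist x y + dist x y) ^ (2 * n) := by positivity
    have h0 : 0 ≤ CK / (dist x y + dist x y) ^ (2 * n) :=
      le_trans (norm_nonneg _) hb
    rcases div_nonneg_iff.mp h0 with h | h
    · exact h.1
    · exact absurd hp (not_lt.2 h.2)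
  -- the weak boundedness constants are nonnegative
  have hWnn : ∀ (ε W : ℝ), WBPBound (truncT K ε) W → 0 ≤ W := by
    intro ε W hW
    have Q1 : Cube n := ⟨fun _ => 0, 1, one_pos⟩
    have h := hW ⟨fun _ => 0, 1, one_pos⟩
    have hv : (Cube.mk (n := n) (fun _ => 0) 1 one_pos).vol = 1 := by
      simp [Cube.vol]
    rw [hv, mul_one] at h
    exact le_trans (norm_nonneg _) h
  have hw1 : 0 ≤ W₁ := hWnn ε₁ W₁ hW₁
  have hw2 : 0 ≤ W₂ := hWnn ε₂ W₂ hW₂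
  intro Q
  have h1 := setIntegral_smoothT_bound hK hCK hφ hε₁ hW₁ Q
  have h2 := setIntegral_smoothT_bound hK hCK hφ (lt_trans hε₁ hε12) hW₂ Q
  show ‖∫ x in Q.set, (smoothT K φ ε₁ (indC Q) (indC Q) x
      - smoothT K φ ε₂ (indC Q) (indC Q) x)‖
    ≤ (2 * 4 ^ (2 * n) + 1) * (CK + W₁ + W₂) * Q.vol
  rw [integral_sub h1.1 h2.1]
  have hA : (1 : ℝ) ≤ 4 ^ (2 * n) := one_le_pow₀ (by norm_num)
  calc ‖(∫ x in Q.set, smoothT K φ ε₁ (indC Q) (indC Q) x)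
        - ∫ x in Q.set, smoothT K φ ε₂ (indC Q) (indC Q) x‖
      ≤ ‖∫ x in Q.set, smoothT K φ ε₁ (indC Q) (indC Q) x‖
        + ‖∫ x in Q.set, smoothT K φ ε₂ (indC Q) (indC Q) x‖ := norm_sub_le _ _
    _ ≤ (CK * 4 ^ (2 * n) + W₁) * Q.vol + (CK * 4 ^ (2 * n) + W₂) * Q.vol :=
        add_le_add h1.2 h2.2
    _ = ((CK * 4 ^ (2 * n) + W₁) + (CK * 4 ^ (2 * n) + W₂)) * Q.vol := by ring
    _ ≤ ((2 * 4 ^ (2 * n) + 1) * (CK + W₁ + W₂)) * Q.vol := by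
        refine mul_le_mul_of_nonneg_right ?_ (cube_vol_pos Q).le
        nlinarith [mul_nonneg hw1 (le_trans zero_le_one hA),
          mul_nonneg hw2 (le_trans zero_le_one hA)]
    _ = (2 * 4 ^ (2 * n) + 1) * (CK + W₁ + W₂) * Q.vol := by ring

end Bilinear
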